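/- The number of permutations of {1,…,2m} all of whose cycles have odd length equals the number of permutations of {1,…,2m} all of whose cycles have even length, for every m ≥ 1. -/

import Mathlib

/-- The length of the cycle of `σ` containing `x` (fixed points give length `1`). -/
noncomputable def cycleLen {N : ℕ} (σ : Equiv.Perm (Fin N)) (x : Fin N) : ℕ :=
  Nat.card {y // σ.SameCycle x y}

set_option linter.unusedSectionVars false



open Equiv Equiv.Perm

namespace S18

variable {α β : Type*}

noncomputable def clen (σ : Perm α) (x : α) : ℕ := Nat.card {y // σ.SameCycle x y}

/-- permCongr as a MulEquiv. -/
def permCongrM (f : α ≃ β) : Perm α ≃* Perm β :=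
  { f.permCongr with
    map_mul' := fun p q => by
      ext x
      simp [Equiv.permCongr_apply, Equiv.Perm.mul_apply] }

lemma permCongr_zpow_apply (f : α ≃ β) (σ : Perm α) (i : ℤ) (x : α) :
    ((f.permCongr σ) ^ i) (f x) = f ((σ ^ i) x) := by
  have h : (f.permCongr σ) ^ i = f.permCongr (σ ^ i) := by
    have := map_zpow (permCongrM f) σ i
    simpa [permCongrM] using this.symm
  rw [h]
  simp

lemma sameCycle_permCongr (f : α ≃ β) (σ : Perm α) (x y : α) :
    (f.permCongr σ).SameCycle (f x) (f y) ↔ σ.SameCycle x y := by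
  constructor
  · rintro ⟨i, hi⟩
    exact ⟨i, f.injective (by rw [← permCongr_zpow_apply]; exact hi)⟩
  · rintro ⟨i, hi⟩
    exact ⟨i, by rw [permCongr_zpow_apply, hi]⟩

lemma clen_permCongr (f : α ≃ β) (σ : Perm α) (x : α) :
    clen (f.permCongr σ) (f x) = clen σ x := by
  symm
  apply Nat.card_congr
  exact f.subtypeEquiv fun y => (sameCycle_permCongr f σ x y).symm







/-- optionCongr on perms as a MonoidHom. -/
def oCM (α : Type*) : Perm α →* Perm (Option α) where
  toFun e := e.optionCongr
  map_one' := by ext x; cases x <;> simp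
  map_mul' p q := by ext x; cases x <;> simp

lemma optionCongr_zpow (e : Perm α) (i : ℤ) :
    (e.optionCongr) ^ i = (e ^ i).optionCongr := (map_zpow (oCM α) e i).symm

lemma sameCycle_optionCongr_some (e : Perm α) (x y : α) :
    Perm.SameCycle e.optionCongr (some x) (some y) ↔ e.SameCycle x y := by
  constructor
  · rintro ⟨i, hi⟩
    refine ⟨i, ?_⟩
    rw [optionCongr_zpow] at hi
    simpa using hi
  · rintro ⟨i, hi⟩
    exact ⟨i, by rw [optionCongr_zpow]; simp [hi]⟩

lemma sameCycle_optionCongr_none (e : Perm α) (u : Option α) :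
    Perm.SameCycle e.optionCongr none u ↔ u = none := by
  constructor
  · rintro ⟨i, hi⟩
    rw [optionCongr_zpow] at hi
    simpa using hi.symm
  · rintro rfl; exact SameCycle.refl _ _

/-- Insert `none` into the cycle of `a` just before `a`. -/
def ins [DecidableEq α] (e : Perm α) (a : α) : Perm (Option α) :=
  Equiv.swap none (some a) * e.optionCongr

variable [DecidableEq α]

lemma ins_none (e : Perm α) (a : α) : ins e a none = some a := by
  simp [ins]

lemma ins_some (e : Perm α) (a : α) (x : α) :
    ins e a (some x) = if e x = a then none else some (e x) := by
  by_cases h : e x = a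
  · simp [ins, h]
  · simp only [ins, Perm.mul_apply]
    have h1 : e.optionCongr (some x) = some (e x) := by simp
    rw [h1, Equiv.swap_apply_of_ne_of_ne (by simp) (by simpa using h), if_neg h]

lemma ins_fwd (e : Perm α) (a : α) :
    ∀ (k : ℕ) (u : Option α) (y : α), ((ins e a) ^ k) u = some y →
      (u = none → e.SameCycle a y) ∧ (∀ x, u = some x → e.SameCycle x y) := by
  intro k
  induction k with
  | zero =>
    intro u y h
    simp only [pow_zero, Perm.one_apply] at h
    subst h
    refine ⟨fun h => by simp at h, fun x hx => ?_⟩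
    obtain rfl : y = x := by injection hx
    exact SameCycle.refl _ _
  | succ k ih =>
    intro u y h
    rw [pow_succ, Perm.mul_apply] at h
    constructor
    · rintro rfl
      rw [ins_none] at h
      exact ((ih _ y h).2 a rfl)
    · rintro x rfl
      rw [ins_some] at h
      by_cases hx : e x = a
      · rw [if_pos hx] at h
        have h1 := (ih _ y h).1 rfl
        exact (show e.SameCycle x a from hx ▸ ⟨1, by simp⟩).trans h1
      · rw [if_neg hx] at h
        have h1 := (ih _ y h).2 (e x) rfl
        exact (show e.SameCycle x (e x) from ⟨1, by simp⟩).trans h1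

lemma ins_step (e : Perm α) (a : α) (x : α) :
    (ins e a).SameCycle (some x) (some (e x)) := by
  by_cases h : e x = a
  · have h1 : (ins e a).SameCycle (some x) none := by
      refine ⟨1, ?_⟩; simp [ins_some, h]
    have h2 : (ins e a).SameCycle none (some (e x)) := by
      refine ⟨1, ?_⟩; simp [ins_none, h]
    exact h1.trans h2
  · exact ⟨1, by simp [ins_some, h]⟩

variable [Fintype α]

lemma sameCycle_ins_some_some (e : Perm α) (a : α) (x y : α) :
    (ins e a).SameCycle (some x) (some y) ↔ e.SameCycle x y := by
  constructor
  · intro h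
    obtain ⟨k, -, hk⟩ := h.exists_pow_eq'
    exact (ins_fwd e a k _ y hk).2 x rfl
  · intro h
    obtain ⟨k, -, hk⟩ := h.exists_pow_eq'
    subst hk
    clear h
    induction k with
    | zero => simpa using SameCycle.refl _ _
    | succ k ih =>
      have hh : (e ^ (k+1)) x = e ((e ^ k) x) := by rw [pow_succ', Perm.mul_apply]
      rw [hh]
      exact ih.trans (ins_step e a _)

lemma sameCycle_ins_none_some (e : Perm α) (a : α) (y : α) :
    (ins e a).SameCycle none (some y) ↔ e.SameCycle a y := by
  constructor
  · intro h
    obtain ⟨k, -, hk⟩ := h.exists_pow_eq'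
    exact (ins_fwd e a k _ y hk).1 rfl
  · intro h
    have h0 : (ins e a).SameCycle none (some a) := ⟨1, by simp [ins_none]⟩
    exact h0.trans ((sameCycle_ins_some_some e a a y).mpr h)





/-- subtype over Option splitting, when `p none` holds -/
def optSub {p : Option α → Prop} (hn : p none) :
    {u : Option α // p u} ≃ Option {x : α // p (some x)} where
  toFun u := match u with
    | ⟨none, _⟩ => none
    | ⟨some x, h⟩ => some ⟨x, h⟩
  invFun o := match o with
    | none => ⟨none, hn⟩
    | some ⟨x, h⟩ => ⟨some x, h⟩
  left_inv := by rintro ⟨u, h⟩; cases u <;> rfl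
  right_inv := by rintro (_ | ⟨x, h⟩) <;> rfl

/-- subtype over Option splitting, when `p none` fails -/
def optSub' {p : Option α → Prop} (hn : ¬ p none) :
    {u : Option α // p u} ≃ {x : α // p (some x)} where
  toFun u := match u with
    | ⟨none, h⟩ => absurd h hn
    | ⟨some x, h⟩ => ⟨x, h⟩
  invFun x := ⟨some x.1, x.2⟩
  left_inv := by rintro ⟨u, h⟩; cases u with | none => exact absurd h hn | some x => rfl
  right_inv := by rintro ⟨x, h⟩; rfl



section clenLemmas

variable {α : Type*} [DecidableEq α] [Fintype α]

lemma sameCycle_ins_some_none (e : Perm α) (a : α) (x : α) :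
    (ins e a).SameCycle (some x) none ↔ e.SameCycle a x := by
  rw [Equiv.Perm.sameCycle_comm, sameCycle_ins_none_some]

lemma clen_optionCongr_none (e : Perm α) : clen e.optionCongr none = 1 := by
  have hn : Perm.SameCycle e.optionCongr none none := SameCycle.refl _ _
  rw [clen, Nat.card_congr (optSub hn)]
  have : IsEmpty {x : α // Perm.SameCycle e.optionCongr none (some x)} := by
    constructor; rintro ⟨x, hx⟩
    simpa using (sameCycle_optionCongr_none e (some x)).mp hx
  rw [Finite.card_option]
  simp [Nat.card_of_isEmpty]

lemma clen_optionCongr_some (e : Perm α) (x : α) :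
    clen e.optionCongr (some x) = clen e x := by
  have hn : ¬ Perm.SameCycle e.optionCongr (some x) none := by
    intro h
    have := (sameCycle_optionCongr_none e (some x)).mp h.symm
    simp at this
  rw [clen, Nat.card_congr (optSub' hn), clen]
  exact Nat.card_congr (Equiv.subtypeEquivRight fun y => sameCycle_optionCongr_some e x y)

lemma clen_ins_none (e : Perm α) (a : α) : clen (ins e a) none = clen e a + 1 := by
  have hn : (ins e a).SameCycle none none := SameCycle.refl _ _
  rw [clen, Nat.card_congr (optSub hn), Finite.card_option, clen]
  congr 1
  exact Nat.card_congr (Equiv.subtypeEquivRight fun y => sameCycle_ins_none_some e a y)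

lemma clen_ins_some_mem (e : Perm α) (a : α) (x : α) (h : e.SameCycle a x) :
    clen (ins e a) (some x) = clen e x + 1 := by
  have hn : (ins e a).SameCycle (some x) none := (sameCycle_ins_some_none e a x).mpr h
  rw [clen, Nat.card_congr (optSub hn), Finite.card_option, clen]
  congr 1
  exact Nat.card_congr (Equiv.subtypeEquivRight fun y => sameCycle_ins_some_some e a x y)

lemma clen_ins_some_notmem (e : Perm α) (a : α) (x : α) (h : ¬ e.SameCycle a x) :
    clen (ins e a) (some x) = clen e x := by
  have hn : ¬ (ins e a).SameCycle (some x) none := fun hc =>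
    h ((sameCycle_ins_some_none e a x).mp hc)
  rw [clen, Nat.card_congr (optSub' hn), clen]
  exact Nat.card_congr (Equiv.subtypeEquivRight fun y => sameCycle_ins_some_some e a x y)

end clenLemmas

section preds

variable {α β : Type*}

def AO (σ : Perm α) : Prop := ∀ x, Odd (clen σ x)
def AE (σ : Perm α) : Prop := ∀ x, Even (clen σ x)
def MO (a : α) (e : Perm α) : Prop :=
  ∀ x, (e.SameCycle a x → Even (clen e x)) ∧ (¬ e.SameCycle a x → Odd (clen e x))
def ME (a : α) (e : Perm α) : Prop :=
  ∀ x, (e.SameCycle a x → Odd (clen e x)) ∧ (¬ e.SameCycle a x → Even (clen e x))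

variable [DecidableEq α] [Fintype α]

lemma AO_optionCongr (e : Perm α) : AO e.optionCongr ↔ AO e := by
  constructor
  · intro h x
    have := h (some x)
    rwa [clen_optionCongr_some] at this
  · intro h u
    cases u with
    | none => rw [clen_optionCongr_none]; exact odd_one
    | some x => rw [clen_optionCongr_some]; exact h x

lemma AE_optionCongr (e : Perm α) : ¬ AE e.optionCongr := by
  intro h
  have := h none
  rw [clen_optionCongr_none] at this
  simp [Nat.even_iff] at this

lemma AO_ins (e : Perm α) (a : α) : AO (ins e a) ↔ MO a e := by
  constructor
  · intro h x
    constructor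
    · intro hx
      have := h (some x)
      rw [clen_ins_some_mem e a x hx] at this
      simpa [Nat.odd_add_one] using this
    · intro hx
      have := h (some x)
      rwa [clen_ins_some_notmem e a x hx] at this
  · intro h u
    cases u with
    | none =>
      rw [clen_ins_none]
      have := (h a).1 (SameCycle.refl _ _)
      simpa [Nat.odd_add_one, Nat.not_odd_iff_even] using this
    | some x =>
      by_cases hx : e.SameCycle a x
      · rw [clen_ins_some_mem e a x hx]
        have := (h x).1 hx
        simpa [Nat.odd_add_one, Nat.not_odd_iff_even] using this
      · rw [clen_ins_some_notmem e a x hx]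
        exact (h x).2 hx

lemma AE_ins (e : Perm α) (a : α) : AE (ins e a) ↔ ME a e := by
  constructor
  · intro h x
    constructor
    · intro hx
      have := h (some x)
      rw [clen_ins_some_mem e a x hx] at this
      simpa [Nat.even_add_one, Nat.not_even_iff_odd] using this
    · intro hx
      have := h (some x)
      rwa [clen_ins_some_notmem e a x hx] at this
  · intro h u
    cases u with
    | none =>
      rw [clen_ins_none]
      have := (h a).1 (SameCycle.refl _ _)
      simpa [Nat.even_add_one, Nat.not_even_iff_odd] using this
    | some x =>
      by_cases hx : e.SameCycle a x
      · rw [clen_ins_some_mem e a x hx]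
        have := (h x).1 hx
        simpa [Nat.even_add_one, Nat.not_even_iff_odd] using this
      · rw [clen_ins_some_notmem e a x hx]
        exact (h x).2 hx

lemma MO_none_optionCongr (e : Perm α) : ¬ MO (none : Option α) e.optionCongr := by
  intro h
  have := (h none).1 (SameCycle.refl _ _)
  rw [clen_optionCongr_none] at this
  simp [Nat.even_iff] at this

lemma MO_none_ins (e : Perm α) (b : α) : MO (none : Option α) (ins e b) ↔ AO e := by
  constructor
  · intro h x
    by_cases hx : e.SameCycle b x
    · have hsc : (ins e b).SameCycle none (some x) := (sameCycle_ins_none_some e b x).mpr hx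
      have := (h (some x)).1 hsc
      rw [clen_ins_some_mem e b x hx] at this
      simpa [Nat.even_add_one, Nat.not_even_iff_odd] using this
    · have hsc : ¬ (ins e b).SameCycle none (some x) := fun hc =>
        hx ((sameCycle_ins_none_some e b x).mp hc)
      have := (h (some x)).2 hsc
      rwa [clen_ins_some_notmem e b x hx] at this
  · intro h u
    cases u with
    | none =>
      refine ⟨fun _ => ?_, fun hc => absurd (SameCycle.refl _ _) hc⟩
      rw [clen_ins_none]
      simpa [Nat.even_add_one, Nat.not_even_iff_odd] using h b
    | some x =>
      by_cases hx : e.SameCycle b x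
      · refine ⟨fun _ => ?_, fun hc => absurd ((sameCycle_ins_none_some e b x).mpr hx) hc⟩
        rw [clen_ins_some_mem e b x hx]
        simpa [Nat.even_add_one, Nat.not_even_iff_odd] using h x
      · refine ⟨fun hc => absurd ((sameCycle_ins_none_some e b x).mp hc) hx, fun _ => ?_⟩
        rw [clen_ins_some_notmem e b x hx]
        exact h x

lemma ME_none_optionCongr (e : Perm α) : ME (none : Option α) e.optionCongr ↔ AE e := by
  constructor
  · intro h x
    have hsc : ¬ Perm.SameCycle e.optionCongr none (some x) := by
      intro hc; simpa using (sameCycle_optionCongr_none e (some x)).mp hc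
    have := (h (some x)).2 hsc
    rwa [clen_optionCongr_some] at this
  · intro h u
    cases u with
    | none =>
      refine ⟨fun _ => ?_, fun hc => absurd (SameCycle.refl _ _) hc⟩
      rw [clen_optionCongr_none]; exact odd_one
    | some x =>
      refine ⟨fun hc => ?_, fun _ => ?_⟩
      · simpa using (sameCycle_optionCongr_none e (some x)).mp hc
      · rw [clen_optionCongr_some]; exact h x

lemma ME_none_ins (e : Perm α) (b : α) : ME (none : Option α) (ins e b) ↔ AE e := by
  constructor
  · intro h x
    by_cases hx : e.SameCycle b x
    · have hsc : (ins e b).SameCycle none (some x) := (sameCycle_ins_none_some e b x).mpr hx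
      have := (h (some x)).1 hsc
      rw [clen_ins_some_mem e b x hx] at this
      simpa [Nat.odd_add_one, Nat.not_odd_iff_even] using this
    · have hsc : ¬ (ins e b).SameCycle none (some x) := fun hc =>
        hx ((sameCycle_ins_none_some e b x).mp hc)
      have := (h (some x)).2 hsc
      rwa [clen_ins_some_notmem e b x hx] at this
  · intro h u
    cases u with
    | none =>
      refine ⟨fun _ => ?_, fun hc => absurd (SameCycle.refl _ _) hc⟩
      rw [clen_ins_none]
      simpa [Nat.odd_add_one, Nat.not_odd_iff_even] using h b
    | some x =>
      by_cases hx : e.SameCycle b x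
      · refine ⟨fun _ => ?_, fun hc => absurd ((sameCycle_ins_none_some e b x).mpr hx) hc⟩
        rw [clen_ins_some_mem e b x hx]
        simpa [Nat.odd_add_one, Nat.not_odd_iff_even] using h x
      · refine ⟨fun hc => absurd ((sameCycle_ins_none_some e b x).mp hc) hx, fun _ => ?_⟩
        rw [clen_ins_some_notmem e b x hx]
        exact h x

end preds

section counting

variable {α β : Type*}

lemma nat_card_sigma {ι : Type*} [Fintype ι] (g : ι → Type*) [∀ i, Finite (g i)] :
    Nat.card (Σ i, g i) = ∑ i, Nat.card (g i) := by
  letI : ∀ i, Fintype (g i) := fun i => Fintype.ofFinite (g i)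
  simp [Nat.card_eq_fintype_card, Fintype.card_sigma]

lemma sum_option'' {M : Type*} [AddCommMonoid M] [Fintype α] (g : Option α → M) :
    ∑ p : Option α, g p = g none + ∑ a : α, g (some a) := by
  rw [univ_option, Finset.sum_insertNone]

lemma card_congr_perm (f : α ≃ β) {P : Perm α → Prop} {Q : Perm β → Prop}
    (h : ∀ σ, P σ ↔ Q (f.permCongr σ)) :
    Nat.card {σ : Perm α // P σ} = Nat.card {τ : Perm β // Q τ} :=
  Nat.card_congr ((f.permCongr : Perm α ≃ Perm β).subtypeEquiv h)

lemma AO_permCongr (f : α ≃ β) (σ : Perm α) : AO (f.permCongr σ) ↔ AO σ := by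
  constructor
  · intro h x
    have := h (f x); rwa [clen_permCongr] at this
  · intro h y
    have h1 := clen_permCongr f σ (f.symm y)
    rw [f.apply_symm_apply] at h1
    rw [h1]; exact h _

lemma AE_permCongr (f : α ≃ β) (σ : Perm α) : AE (f.permCongr σ) ↔ AE σ := by
  constructor
  · intro h x
    have := h (f x); rwa [clen_permCongr] at this
  · intro h y
    have h1 := clen_permCongr f σ (f.symm y)
    rw [f.apply_symm_apply] at h1
    rw [h1]; exact h _

lemma sameCycle_permCongr' (f : α ≃ β) (e : Perm α) (a : α) (y : β) :
    (f.permCongr e).SameCycle (f a) y ↔ e.SameCycle a (f.symm y) := by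
  have := sameCycle_permCongr f e a (f.symm y)
  rwa [f.apply_symm_apply] at this

lemma MO_permCongr (f : α ≃ β) (e : Perm α) (a : α) :
    MO (f a) (f.permCongr e) ↔ MO a e := by
  constructor
  · intro h x
    have := h (f x)
    rw [sameCycle_permCongr, clen_permCongr] at this
    exact this
  · intro h y
    have h1 := clen_permCongr f e (f.symm y)
    rw [f.apply_symm_apply] at h1
    rw [sameCycle_permCongr', h1]
    exact h _

lemma ME_permCongr (f : α ≃ β) (e : Perm α) (a : α) :
    ME (f a) (f.permCongr e) ↔ ME a e := by
  constructor
  · intro h x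
    have := h (f x)
    rw [sameCycle_permCongr, clen_permCongr] at this
    exact this
  · intro h y
    have h1 := clen_permCongr f e (f.symm y)
    rw [f.apply_symm_apply] at h1
    rw [sameCycle_permCongr', h1]
    exact h _

variable [DecidableEq α] [Fintype α]

lemma decomposeOption_symm_none (e : Perm α) :
    Perm.decomposeOption.symm ((none : Option α), e) = e.optionCongr := by
  simp [Equiv.Perm.decomposeOption, Equiv.swap_self]; rfl

lemma decomposeOption_symm_some (e : Perm α) (a : α) :
    Perm.decomposeOption.symm (some a, e) = ins e a := rfl

lemma card_perm_option_split (P : Perm (Option α) → Prop) :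
    Nat.card {σ : Perm (Option α) // P σ} =
      Nat.card {e : Perm α // P e.optionCongr} +
        ∑ a : α, Nat.card {e : Perm α // P (ins e a)} := by
  have h1 : ∀ σ : Perm (Option α),
      P σ ↔ P (Perm.decomposeOption.symm (Perm.decomposeOption σ)) := fun σ => by
    rw [Equiv.symm_apply_apply]
  rw [Nat.card_congr ((Perm.decomposeOption (α := α)).subtypeEquiv
    (q := fun z => P (Perm.decomposeOption.symm z)) h1)]
  rw [Nat.card_congr (Equiv.subtypeProdEquivSigmaSubtype
    (fun (p : Option α) (e : Perm α) => P (Perm.decomposeOption.symm (p, e))))]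
  rw [nat_card_sigma]
  rw [sum_option'']
  have hnone : Nat.card {e : Perm α // P (Perm.decomposeOption.symm (none, e))}
      = Nat.card {e : Perm α // P e.optionCongr} :=
    Nat.card_congr (Equiv.subtypeEquivRight fun e => by rw [decomposeOption_symm_none])
  have hsome : ∀ a : α, Nat.card {e : Perm α // P (Perm.decomposeOption.symm (some a, e))}
      = Nat.card {e : Perm α // P (ins e a)} := fun a =>
    Nat.card_congr (Equiv.subtypeEquivRight fun e => by rw [decomposeOption_symm_some])
  rw [hnone]
  exact congrArg _ (Finset.sum_congr rfl fun a _ => hsome a)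

end counting

section assemble

variable {α β : Type*} [DecidableEq α] [Fintype α]

lemma count_AO_option :
    Nat.card {σ : Perm (Option α) // AO σ} =
      Nat.card {e : Perm α // AO e} + ∑ a : α, Nat.card {e : Perm α // MO a e} := by
  rw [card_perm_option_split (AO (α := Option α))]
  rw [show Nat.card {e : Perm α // AO e.optionCongr} = Nat.card {e : Perm α // AO e} from
    Nat.card_congr (Equiv.subtypeEquivRight fun e => AO_optionCongr e)]
  exact congrArg _ (Finset.sum_congr rfl fun a _ =>
    Nat.card_congr (Equiv.subtypeEquivRight fun e => AO_ins e a))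

lemma count_AE_option :
    Nat.card {σ : Perm (Option α) // AE σ} = ∑ a : α, Nat.card {e : Perm α // ME a e} := by
  rw [card_perm_option_split (AE (α := Option α))]
  have h0 : Nat.card {e : Perm α // AE e.optionCongr} = 0 := by
    haveI : IsEmpty {e : Perm α // AE e.optionCongr} :=
      ⟨fun ⟨e, he⟩ => AE_optionCongr e he⟩
    exact Nat.card_of_isEmpty
  rw [h0, zero_add]
  exact Finset.sum_congr rfl fun a _ =>
    Nat.card_congr (Equiv.subtypeEquivRight fun e => AE_ins e a)

lemma count_MO_none :
    Nat.card {σ : Perm (Option α) // MO none σ} =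
      Fintype.card α * Nat.card {e : Perm α // AO e} := by
  rw [card_perm_option_split (MO (none : Option α))]
  have h0 : Nat.card {e : Perm α // MO (none : Option α) e.optionCongr} = 0 := by
    haveI : IsEmpty {e : Perm α // MO (none : Option α) e.optionCongr} :=
      ⟨fun ⟨e, he⟩ => MO_none_optionCongr e he⟩
    exact Nat.card_of_isEmpty
  rw [h0, zero_add]
  rw [Finset.sum_congr rfl fun (a : α) _ =>
    Nat.card_congr (Equiv.subtypeEquivRight fun e => MO_none_ins e a)]
  simp [Finset.sum_const, Finset.card_univ, mul_comm]

lemma count_ME_none :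
    Nat.card {σ : Perm (Option α) // ME none σ} =
      (Fintype.card α + 1) * Nat.card {e : Perm α // AE e} := by
  rw [card_perm_option_split (ME (none : Option α))]
  rw [show Nat.card {e : Perm α // ME (none : Option α) e.optionCongr}
      = Nat.card {e : Perm α // AE e} from
    Nat.card_congr (Equiv.subtypeEquivRight fun e => ME_none_optionCongr e)]
  rw [Finset.sum_congr rfl fun (a : α) _ =>
    Nat.card_congr (Equiv.subtypeEquivRight fun e => ME_none_ins e a)]
  simp [Finset.sum_const, Finset.card_univ]
  ring

lemma MO_card_eq (a b : α) :
    Nat.card {e : Perm α // MO a e} = Nat.card {e : Perm α // MO b e} := by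
  apply card_congr_perm (Equiv.swap a b)
  intro e
  have := MO_permCongr (Equiv.swap a b) e a
  rw [Equiv.swap_apply_left] at this
  exact this.symm

lemma ME_card_eq (a b : α) :
    Nat.card {e : Perm α // ME a e} = Nat.card {e : Perm α // ME b e} := by
  apply card_congr_perm (Equiv.swap a b)
  intro e
  have := ME_permCongr (Equiv.swap a b) e a
  rw [Equiv.swap_apply_left] at this
  exact this.symm

noncomputable def O (n : ℕ) : ℕ := Nat.card {σ : Perm (Fin n) // AO σ}
noncomputable def E (n : ℕ) : ℕ := Nat.card {σ : Perm (Fin n) // AE σ}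

lemma O_succ (n : ℕ) : O (n + 1) = Nat.card {σ : Perm (Option (Fin n)) // AO σ} :=
  card_congr_perm (finSuccEquiv n) fun σ => (AO_permCongr _ σ).symm

lemma E_succ (n : ℕ) : E (n + 1) = Nat.card {σ : Perm (Option (Fin n)) // AE σ} :=
  card_congr_perm (finSuccEquiv n) fun σ => (AE_permCongr _ σ).symm

lemma O_succ_succ (n : ℕ) :
    O (n + 2) = Nat.card {σ : Perm (Option (Option (Fin n))) // AO σ} :=
  card_congr_perm ((finSuccEquiv (n+1)).trans (finSuccEquiv n).optionCongr)
    fun σ => (AO_permCongr _ σ).symm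

lemma E_succ_succ (n : ℕ) :
    E (n + 2) = Nat.card {σ : Perm (Option (Option (Fin n))) // AE σ} :=
  card_congr_perm ((finSuccEquiv (n+1)).trans (finSuccEquiv n).optionCongr)
    fun σ => (AE_permCongr _ σ).symm

lemma O_rec (n : ℕ) : O (n + 2) = O (n + 1) + (n + 1) * (n * O n) := by
  rw [O_succ_succ, count_AO_option, ← O_succ]
  congr 1
  rw [Finset.sum_congr rfl fun (a : Option (Fin n)) _ => MO_card_eq a none]
  rw [Finset.sum_const, Finset.card_univ, smul_eq_mul]
  rw [count_MO_none]
  simp only [Fintype.card_option, Fintype.card_fin]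
  rfl

lemma E_rec (n : ℕ) : E (n + 2) = (n + 1) * ((n + 1) * E n) := by
  rw [E_succ_succ, count_AE_option]
  rw [Finset.sum_congr rfl fun (a : Option (Fin n)) _ => ME_card_eq a none]
  rw [Finset.sum_const, Finset.card_univ, smul_eq_mul]
  rw [count_ME_none]
  simp only [Fintype.card_option, Fintype.card_fin]
  rfl

lemma O_zero : O 0 = 1 := by
  have h : ∀ σ : Perm (Fin 0), AO σ := fun σ x => x.elim0
  rw [O, Nat.card_congr (Equiv.subtypeUnivEquiv h)]
  simp [Nat.card_eq_fintype_card]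

lemma E_zero : E 0 = 1 := by
  have h : ∀ σ : Perm (Fin 0), AE σ := fun σ x => x.elim0
  rw [E, Nat.card_congr (Equiv.subtypeUnivEquiv h)]
  simp [Nat.card_eq_fintype_card]

lemma O_one : O 1 = 1 := by
  have h : ∀ σ : Perm (Fin 1), AO σ := by
    intro σ x
    have : clen σ x = 1 := by
      haveI : Unique {y // σ.SameCycle x y} :=
        ⟨⟨⟨x, SameCycle.refl _ _⟩⟩, fun y => Subtype.ext (Subsingleton.elim _ _)⟩
      exact Nat.card_unique
    rw [this]; exact odd_one
  rw [O, Nat.card_congr (Equiv.subtypeUnivEquiv h)]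
  simp [Nat.card_eq_fintype_card]

lemma key : ∀ m : ℕ, O (2 * m) = E (2 * m) ∧ O (2 * m + 1) = (2 * m + 1) * O (2 * m) := by
  intro m
  induction m with
  | zero => refine ⟨?_, ?_⟩ <;> norm_num [O_zero, E_zero, O_one]
  | succ m ih =>
    obtain ⟨h1, h2⟩ := ih
    have hO2 : O (2 * m + 2) = (2 * m + 1) * ((2 * m + 1) * O (2 * m)) := by
      rw [O_rec, h2]; ring
    constructor
    · show O (2 * m + 2) = E (2 * m + 2)
      rw [hO2, E_rec, h1]
    · have r1 : O (2 * m + 3) = O (2 * m + 2) + (2 * m + 2) * ((2 * m + 1) * O (2 * m + 1)) :=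
        O_rec (2 * m + 1)
      show O (2 * m + 3) = (2 * m + 3) * O (2 * m + 2)
      rw [r1, hO2, h2]; ring

end assemble

end S18


/-- Bóna–McLennan–White: For every `m ≥ 1`, the number of permutations of
`{1,…,2m}` all of whose cycles have odd length equals the number of permutations of
`{1,…,2m}` all of whose cycles have even length. -/
theorem stmt18 (m : ℕ) (hm : 1 ≤ m) :
    Nat.card {σ : Equiv.Perm (Fin (2 * m)) // ∀ x, Odd (cycleLen σ x)} =
      Nat.card {σ : Equiv.Perm (Fin (2 * m)) // ∀ x, Even (cycleLen σ x)} := by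
  exact (S18.key m).1
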